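/- For integers p, q, c, d, e, there exist integers α, β, x, y with e + 2αβ + p·q − α·q − β·p = x·c + y·d if and only if at least one of p, q, c, d is odd, or e is even. -/
import Mathlib


theorem lk_two_nh_four_criterion (p q c d e : ℤ) :
    (∃ α β x y : ℤ, e + 2 * α * β + p * q - α * q - β * p = x * c + y * d) ↔
      (Odd p ∨ Odd q ∨ Odd c ∨ Odd d ∨ Even e) := by
  constructor
  · rintro ⟨α, β, x, y, h⟩
    by_contra hcon
    push_neg at hcon
    obtain ⟨hp, hq, hc, hd, he⟩ := hcon
    rw [Int.not_odd_iff_even] at hp hq hc hd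
    rw [Int.not_even_iff_odd] at he
    have h1 : Odd (e + 2 * α * β + p * q - α * q - β * p) := by
      have e1 : Even (2 * α * β) := ⟨α * β, by ring⟩
      have e2 : Even (p * q) := hp.mul_right q
      have e3 : Even (α * q) := hq.mul_left α
      have e4 : Even (β * p) := hp.mul_left β
      exact (((he.add_even e1).add_even e2).sub_even e3).sub_even e4
    have h2 : Even (x * c + y * d) := (hc.mul_left x).add (hd.mul_left y)
    rw [h] at h1
    exact (Int.not_odd_iff_even.mpr h2) h1
  · rintro (⟨k, hk⟩ | ⟨k, hk⟩ | ⟨m, hm⟩ | ⟨m, hm⟩ | he)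
    · subst hk
      exact ⟨k + 1, -(e + (2 * k + 1) * q - (k + 1) * q), 0, 0, by ring⟩
    · subst hk
      exact ⟨-(e + p * (2 * k + 1) - (k + 1) * p), k + 1, 0, 0, by ring⟩
    · subst hm
      refine ⟨(p + 1) * (m + 1), -(e + p * q - (p + 1) * (m + 1) * q),
        (p + 1) * -(e + p * q - (p + 1) * (m + 1) * q), 0, by ring⟩
    · subst hm
      refine ⟨-(e + p * q - p * ((q + 1) * (m + 1))), (q + 1) * (m + 1), 0,
        (q + 1) * -(e + p * q - p * ((q + 1) * (m + 1))), by ring⟩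
    · rcases Int.even_or_odd p with ⟨a, ha⟩ | ⟨k, hk⟩
      · rcases Int.even_or_odd q with ⟨b, hb⟩ | ⟨k, hk⟩
        · obtain ⟨n, hn⟩ := he
          subst ha hb hn
          exact ⟨a + 1, -(n + a * b - b), 0, 0, by ring⟩
        · subst hk
          exact ⟨-(e + p * (2 * k + 1) - (k + 1) * p), k + 1, 0, 0, by ring⟩
      · subst hk
        exact ⟨k + 1, -(e + (2 * k + 1) * q - (k + 1) * q), 0, 0, by ring⟩
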